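/- Let m, n, w, h, p be natural numbers, let A⁰, A¹, …, A^w be real m×n matrices (a matrix zonotope with center A⁰ and generators A¹,…,A^w), let c ∈ ℝⁿ, let G₁,…,G_h ∈ ℝⁿ, and let E be a p×h matrix of natural numbers (the exponent matrix of a polynomial zonotope with no independent generators). Then the set { (A⁰ + ∑_{l=1}^{w} ρ_l A^l)(c + ∑_{i=1}^{h} (∏_{k=1}^{p} α_k^{E(k,i)}) G_i) : ρ_l ∈ [-1,1] for all l, α_k ∈ [-1,1] for all k } equals the set { A⁰c + ∑_{i=1}^{h} (∏_{k=1}^{p} α_k^{E(k,i)}) (A⁰ G_i) + ∑_{l=1}^{w} ρ_l (A^l c) + ∑_{l=1}^{w} ∑_{i=1}^{h} ρ_l (∏_{k=1}^{p} α_k^{E(k,i)}) (A^l G_i) : ρ_l ∈ [-1,1], α_k ∈ [-1,1] }, i.e. the product of a matrix zonotope with a polynomial zonotope without independent generators is again a polynomial zonotope whose dependent generators are A⁰G_i, A^l c, and A^l G_i with the indicated monomial coefficients. -/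

import Mathlib

open Matrix

lemma sum_mulVec' {ι m n : Type*} [Fintype n] (s : Finset ι)
    (M : ι → Matrix m n ℝ) (x : n → ℝ) :
    (∑ i ∈ s, M i) *ᵥ x = ∑ i ∈ s, M i *ᵥ x := by
  classical
  induction s using Finset.induction with
  | empty => simp [Matrix.zero_mulVec]
  | insert _ _ hi ih => simp [Finset.sum_insert hi, add_mulVec, ih]

lemma mulVec_sum' {ι m n : Type*} [Fintype n] (s : Finset ι)
    (M : Matrix m n ℝ) (v : ι → n → ℝ) :
    M *ᵥ (∑ i ∈ s, v i) = ∑ i ∈ s, M *ᵥ v i := by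
  classical
  induction s using Finset.induction with
  | empty => simp [Matrix.mulVec_zero]
  | insert _ _ hi ih => simp [Finset.sum_insert hi, mulVec_add, ih]

lemma key_expand {m n w h p : ℕ}
    (A0 : Matrix (Fin m) (Fin n) ℝ) (A : Fin w → Matrix (Fin m) (Fin n) ℝ)
    (c : Fin n → ℝ) (G : Fin h → Fin n → ℝ) (E : Fin p → Fin h → ℕ)
    (ρ : Fin w → ℝ) (α : Fin p → ℝ) :
    (A0 + ∑ l, ρ l • A l) *ᵥ (c + ∑ i, (∏ k, α k ^ E k i) • G i) =
    A0 *ᵥ c + (∑ i, (∏ k, α k ^ E k i) • (A0 *ᵥ G i))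
      + (∑ l, ρ l • (A l *ᵥ c))
      + ∑ l, ∑ i, (ρ l * ∏ k, α k ^ E k i) • (A l *ᵥ G i) := by
  simp only [add_mulVec, mulVec_add, sum_mulVec', mulVec_sum', Matrix.smul_mulVec,
    mulVec_smul, Finset.smul_sum, mul_smul]
  rw [Finset.sum_comm]
  have : ∀ (l : Fin w) (i : Fin h),
      (∏ k, α k ^ E k i) • ρ l • (A l *ᵥ G i) = ρ l • (∏ k, α k ^ E k i) • (A l *ᵥ G i) :=
    fun l i => smul_comm _ _ _
  simp only [this]
  abel

/-- The product of a matrix zonotope (center `A0`, generators `A l`) with a polynomial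
zonotope without independent generators (offset `c`, dependent generators `G i`,
exponent matrix `E`) is again a polynomial zonotope with dependent generators
`A0 *ᵥ G i`, `A l *ᵥ c`, and `A l *ᵥ G i` with the indicated monomial coefficients. -/
theorem matrix_zonotope_mul_polyZonotope (m n w h p : ℕ)
    (A0 : Matrix (Fin m) (Fin n) ℝ) (A : Fin w → Matrix (Fin m) (Fin n) ℝ)
    (c : Fin n → ℝ) (G : Fin h → Fin n → ℝ) (E : Fin p → Fin h → ℕ) :
    {y : (Fin m → ℝ) | ∃ (ρ : Fin w → ℝ) (α : Fin p → ℝ),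
        (∀ l, ρ l ∈ Set.Icc (-1 : ℝ) 1) ∧ (∀ k, α k ∈ Set.Icc (-1 : ℝ) 1) ∧
        y = (A0 + ∑ l, ρ l • A l) *ᵥ
              (c + ∑ i, (∏ k, α k ^ E k i) • G i)} =
    {y : (Fin m → ℝ) | ∃ (ρ : Fin w → ℝ) (α : Fin p → ℝ),
        (∀ l, ρ l ∈ Set.Icc (-1 : ℝ) 1) ∧ (∀ k, α k ∈ Set.Icc (-1 : ℝ) 1) ∧
        y = A0 *ᵥ c + (∑ i, (∏ k, α k ^ E k i) • (A0 *ᵥ G i))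
              + (∑ l, ρ l • (A l *ᵥ c))
              + ∑ l, ∑ i, (ρ l * ∏ k, α k ^ E k i) • (A l *ᵥ G i)} := by
  ext y
  constructor
  · rintro ⟨ρ, α, hρ, hα, rfl⟩
    exact ⟨ρ, α, hρ, hα, key_expand A0 A c G E ρ α⟩
  · rintro ⟨ρ, α, hρ, hα, rfl⟩
    exact ⟨ρ, α, hρ, hα, (key_expand A0 A c G E ρ α).symm⟩
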